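/- Let K be a spherically complete valued field of equi-characteristic 0, B ⊆ Kⁿ a ball, X ⊆ Kⁿ a set, W ⊆ Kⁿ a vector subspace, ψ : B → B a W-straightener of X on B, and λ an element of the value group. Then ψ is also a W-straightener on B of the tubular neighbourhood X'' := X + B_{≤λ}(0) = {y ∈ Kⁿ : ∃x ∈ X, |x − y| ≤ λ}. -/
import Mathlib


/-- The sup-norm on `Kⁿ` induced by a valuation `v : K → Γ₀`. -/
noncomputable def supVal {K Γ₀ : Type*} [Field K] [LinearOrderedCommGroupWithZero Γ₀]
    (v : Valuation K Γ₀) {n : ℕ} (x : Fin n → K) : Γ₀ :=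
  letI : OrderBot Γ₀ := { bot := 0, bot_le := fun _ => zero_le' }
  Finset.univ.sup fun i => v (x i)

/-- A (valuative) ball in `K`. -/
def IsBall1 {K Γ₀ : Type*} [Field K] [LinearOrderedCommGroupWithZero Γ₀]
    (v : Valuation K Γ₀) (B : Set K) : Prop :=
  B.Infinite ∧ ∀ x ∈ B, ∀ x' ∈ B, ∀ y : K, v (x - y) ≤ v (x - x') → y ∈ B

/-- A (valuative) ball in `Kⁿ` with respect to the sup-norm. -/
def IsBall {K Γ₀ : Type*} [Field K] [LinearOrderedCommGroupWithZero Γ₀]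
    (v : Valuation K Γ₀) {n : ℕ} (B : Set (Fin n → K)) : Prop :=
  B.Infinite ∧ ∀ x ∈ B, ∀ x' ∈ B, ∀ y : Fin n → K,
    supVal v (x - y) ≤ supVal v (x - x') → y ∈ B

/-- `K` is spherically complete. -/
def SphericallyComplete {K Γ₀ : Type*} [Field K] [LinearOrderedCommGroupWithZero Γ₀]
    (v : Valuation K Γ₀) : Prop :=
  ∀ C : Set (Set K), C.Nonempty → (∀ B ∈ C, IsBall1 v B) →
    IsChain (· ⊆ ·) C → (⋂₀ C).Nonempty

/-- A risometry from `B₁` onto `B₂`. -/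
def IsRisometryOn {K Γ₀ : Type*} [Field K] [LinearOrderedCommGroupWithZero Γ₀]
    (v : Valuation K Γ₀) {n : ℕ} (φ : (Fin n → K) → (Fin n → K))
    (B₁ B₂ : Set (Fin n → K)) : Prop :=
  Set.BijOn φ B₁ B₂ ∧
    ∀ x₁ ∈ B₁, ∀ x₂ ∈ B₁, x₁ ≠ x₂ →
      supVal v (φ x₁ - φ x₂ - (x₁ - x₂)) < supVal v (x₁ - x₂)

section Aux

variable {K Γ₀ : Type*} [Field K] [LinearOrderedCommGroupWithZero Γ₀]
  (v : Valuation K Γ₀) {n : ℕ}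

theorem le_supVal (x : Fin n → K) (i : Fin n) : v (x i) ≤ supVal v x := by
  letI : OrderBot Γ₀ := { bot := 0, bot_le := fun _ => zero_le' }
  exact Finset.le_sup (f := fun j => v (x j)) (Finset.mem_univ i)

theorem supVal_le_iff {x : Fin n → K} {c : Γ₀} : supVal v x ≤ c ↔ ∀ i, v (x i) ≤ c := by
  letI : OrderBot Γ₀ := { bot := 0, bot_le := fun _ => zero_le' }
  constructor
  · intro h i; exact le_trans (le_supVal v x i) h
  · intro h; exact Finset.sup_le (f := fun j => v (x j)) fun i _ => h i

theorem supVal_zero : supVal v (0 : Fin n → K) = 0 :=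
  le_antisymm ((supVal_le_iff v).mpr fun i => by simp) zero_le'

theorem supVal_add_le (x y : Fin n → K) :
    supVal v (x + y) ≤ max (supVal v x) (supVal v y) := by
  rw [supVal_le_iff]
  intro i
  calc v ((x + y) i) = v (x i + y i) := rfl
    _ ≤ max (v (x i)) (v (y i)) := v.map_add _ _
    _ ≤ max (supVal v x) (supVal v y) := max_le_max (le_supVal v x i) (le_supVal v y i)

theorem supVal_neg (x : Fin n → K) : supVal v (-x) = supVal v x := by
  simp only [supVal, Pi.neg_apply, Valuation.map_neg]

theorem supVal_sub_comm (x y : Fin n → K) : supVal v (x - y) = supVal v (y - x) := by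
  rw [← supVal_neg v (y - x), neg_sub]

theorem riso_supVal {B₁ B₂ : Set (Fin n → K)} {ψ : (Fin n → K) → (Fin n → K)}
    (hψ : IsRisometryOn v ψ B₁ B₂) {x₁ x₂ : Fin n → K}
    (h1 : x₁ ∈ B₁) (h2 : x₂ ∈ B₁) :
    supVal v (ψ x₁ - ψ x₂) = supVal v (x₁ - x₂) := by
  by_cases hx : x₁ = x₂
  · subst hx; simp [supVal_zero]
  have hlt := hψ.2 x₁ h1 x₂ h2 hx
  refine le_antisymm ?_ ?_
  · have e : ψ x₁ - ψ x₂ = (ψ x₁ - ψ x₂ - (x₁ - x₂)) + (x₁ - x₂) := by abel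
    have h2' := supVal_add_le v (ψ x₁ - ψ x₂ - (x₁ - x₂)) (x₁ - x₂)
    rw [← e] at h2'
    exact le_trans h2' (max_le hlt.le le_rfl)
  · by_contra hc
    push_neg at hc
    have e : x₁ - x₂ = (ψ x₁ - ψ x₂) + -(ψ x₁ - ψ x₂ - (x₁ - x₂)) := by abel
    have h3 := supVal_add_le v (ψ x₁ - ψ x₂) (-(ψ x₁ - ψ x₂ - (x₁ - x₂)))
    rw [← e, supVal_neg] at h3
    exact absurd (lt_of_le_of_lt h3 (max_lt hc hlt)) (lt_irrefl _)

theorem tub_key {B : Set (Fin n → K)} (hB : IsBall v B)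
    {X : Set (Fin n → K)} {W : Submodule K (Fin n → K)}
    {ψ : (Fin n → K) → (Fin n → K)} (hψ : IsRisometryOn v ψ B B)
    (hstraight : ∀ x ∈ B, ∀ x' ∈ B, x - x' ∈ W → (ψ x ∈ X ↔ ψ x' ∈ X))
    {lam : Γ₀} {x x' : Fin n → K} (hx : x ∈ B) (hx' : x' ∈ B)
    (hW : x - x' ∈ W) (hxx : x ≠ x')
    (h : ∃ x₀ ∈ X, supVal v (x₀ - ψ x) ≤ lam) :
    ∃ x₀ ∈ X, supVal v (x₀ - ψ x') ≤ lam := by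
  obtain ⟨x₀, hx₀X, hx₀⟩ := h
  by_cases hcase : supVal v (x - x') ≤ lam
  · refine ⟨x₀, hx₀X, ?_⟩
    have e : x₀ - ψ x' = (x₀ - ψ x) + (ψ x - ψ x') := by abel
    have h2 := supVal_add_le v (x₀ - ψ x) (ψ x - ψ x')
    rw [← e, riso_supVal v hψ hx hx'] at h2
    exact le_trans h2 (max_le hx₀ hcase)
  · push_neg at hcase
    have hψx : ψ x ∈ B := hψ.1.mapsTo hx
    have hψx' : ψ x' ∈ B := hψ.1.mapsTo hx'
    have hx₀B : x₀ ∈ B := by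
      refine hB.2 (ψ x) hψx (ψ x') hψx' x₀ (le_of_lt ?_)
      calc supVal v (ψ x - x₀) = supVal v (x₀ - ψ x) := supVal_sub_comm v _ _
        _ ≤ lam := hx₀
        _ < supVal v (x - x') := hcase
        _ = supVal v (ψ x - ψ x') := (riso_supVal v hψ hx hx').symm
    obtain ⟨z, hzB, hz⟩ := hψ.1.surjOn hx₀B
    have hzx : supVal v (z - x) ≤ lam := by
      calc supVal v (z - x) = supVal v (ψ z - ψ x) := (riso_supVal v hψ hzB hx).symm
        _ = supVal v (x₀ - ψ x) := by rw [hz]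
        _ ≤ lam := hx₀
    set w := z + (x' - x) with hw
    have hwB : w ∈ B := by
      refine hB.2 x' hx' x hx w (le_of_lt ?_)
      calc supVal v (x' - w) = supVal v (x - z) := by rw [hw]; congr 1; abel
        _ = supVal v (z - x) := supVal_sub_comm v _ _
        _ ≤ lam := hzx
        _ < supVal v (x - x') := hcase
        _ = supVal v (x' - x) := supVal_sub_comm v _ _
    have hzw : z - w ∈ W := by
      have e : z - w = x - x' := by rw [hw]; abel
      rw [e]; exact hW
    have hXw : ψ w ∈ X := (hstraight z hzB w hwB hzw).mp (by rw [hz]; exact hx₀X)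
    refine ⟨ψ w, hXw, ?_⟩
    calc supVal v (ψ w - ψ x') = supVal v (w - x') := riso_supVal v hψ hwB hx'
      _ = supVal v (z - x) := by rw [hw]; congr 1; abel
      _ ≤ lam := hzx

end Aux

/-- a `W`-straightener of `X` on a ball `B` (over a spherically
complete valued field of equi-characteristic 0) is also a `W`-straightener of the
tubular neighbourhood `X'' = X + B_{≤λ}(0) = {y : ∃ x ∈ X, |x − y| ≤ λ}`. -/
theorem straightener_of_tubular_neighbourhood {K Γ₀ : Type*} [Field K]
    [LinearOrderedCommGroupWithZero Γ₀] (v : Valuation K Γ₀) [CharZero K]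
    (hres : ∀ m : ℕ, m ≠ 0 → v (m : K) = 1) (hsph : SphericallyComplete v)
    {n : ℕ} (B : Set (Fin n → K)) (hB : IsBall v B)
    (X : Set (Fin n → K)) (W : Submodule K (Fin n → K))
    (ψ : (Fin n → K) → (Fin n → K)) (hψ : IsRisometryOn v ψ B B)
    (hstraight : ∀ x ∈ B, ∀ x' ∈ B, x - x' ∈ W → (ψ x ∈ X ↔ ψ x' ∈ X))
    (lam : Γ₀) :
    ∀ x ∈ B, ∀ x' ∈ B, x - x' ∈ W →
      (ψ x ∈ {y | ∃ x₀ ∈ X, supVal v (x₀ - y) ≤ lam} ↔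
        ψ x' ∈ {y | ∃ x₀ ∈ X, supVal v (x₀ - y) ≤ lam}) := by
  intro x hx x' hx' hW
  by_cases hxx : x = x'
  · subst hxx; rfl
  simp only [Set.mem_setOf_eq]
  constructor
  · exact tub_key v hB hψ hstraight hx hx' hW hxx
  · have hW' : x' - x ∈ W := by rw [← neg_sub]; exact W.neg_mem hW
    exact tub_key v hB hψ hstraight hx' hx hW' (Ne.symm hxx)
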